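/- Consider the localizations R[1/a₁], R[1/a₃], and R[1/(a₁a₃)] of R, with the canonical maps α : R → R[1/a₁] × R[1/a₃], r ↦ (r/1, r/1), and β : R[1/a₁] × R[1/a₃] → R[1/(a₁a₃)], (p, q) ↦ (image of p) − (image of q). Then α is injective and the kernel of β equals the range of α. (This is the degeneration of the Mayer–Vietoris sequence for the cover of the curve by the loci where a₁ and a₃ are invertible.) -/

import Mathlib

open MvPolynomial

noncomputable section

/-- `c = a₁⁶ + a₁³a₃ + a₃²` in `P = ℤ_[2][a₁, a₃, a₆]` (with `X 0 = a₁`, `X 1 = a₃`, `X 2 = a₆`). -/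
def cpoly : MvPolynomial (Fin 3) ℤ_[2] := (X 0) ^ 6 + (X 0) ^ 3 * X 1 + (X 1) ^ 2

/-- `f = a₆² + a₆·c + c² − (5/9)·a₁⁶·c` in `P`. -/
def fpoly : MvPolynomial (Fin 3) ℤ_[2] :=
  (X 2) ^ 2 + X 2 * cpoly + cpoly ^ 2 - C (5 * Ring.inverse 9) * (X 0) ^ 6 * cpoly

/-- `R = P/(f)`, the ring of automorphic forms on the double cover `𝒴`. -/
abbrev RD : Type := MvPolynomial (Fin 3) ℤ_[2] ⧸ Ideal.span {fpoly}

/-- The image of `a₁` in `R`. -/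
def b₁ : RD := Ideal.Quotient.mk _ (X 0)
/-- The image of `a₃` in `R`. -/
def b₃ : RD := Ideal.Quotient.mk _ (X 1)
/-- The image of `a₆` in `R`. -/
def b₆ : RD := Ideal.Quotient.mk _ (X 2)


abbrev Ap : Type := MvPolynomial (Fin 2) ℤ_[2]

def Emv : MvPolynomial (Fin 3) ℤ_[2] ≃+* Polynomial Ap :=
  (renameEquiv ℤ_[2] (finRotate 3)).toRingEquiv.trans (finSuccEquiv ℤ_[2] 2).toRingEquiv
def cA : Ap := (X 0) ^ 6 + (X 0) ^ 3 * X 1 + (X 1) ^ 2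
def G : Polynomial Ap :=
  Polynomial.X ^ 2 + Polynomial.C cA * Polynomial.X
    + Polynomial.C (cA ^ 2 - C (5 * Ring.inverse 9) * (X 0) ^ 6 * cA)
lemma Emv_X0 : Emv (X 0) = Polynomial.C (X 0) := by simp [Emv, finSuccEquiv_apply]; rfl
lemma Emv_X1 : Emv (X 1) = Polynomial.C (X 1) := by simp [Emv, finSuccEquiv_apply]; rfl
lemma Emv_X2 : Emv (X 2) = Polynomial.X := by simp [Emv, finSuccEquiv_apply]
lemma Emv_C (r : ℤ_[2]) : Emv (C r) = Polynomial.C (C r) := by simp [Emv, finSuccEquiv_apply]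
lemma Emv_f : Emv fpoly = G := by
  simp only [fpoly, cpoly, G, cA, map_add, map_sub, map_mul, map_pow, Emv_X0, Emv_X1, Emv_X2,
    Emv_C, Polynomial.C_add, Polynomial.C_mul, Polynomial.C_pow, Polynomial.C_sub]
  ring
lemma hG : G.Monic := by unfold G; monicity!
def eRD : RD ≃+* AdjoinRoot G :=
  Ideal.quotientEquiv _ _ Emv (by
    rw [Ideal.map_span, Set.image_singleton]
    exact congrArg (fun p => Ideal.span {p}) Emv_f.symm)
lemma eRD_b₁ : eRD b₁ = algebraMap Ap (AdjoinRoot G) (X 0) := by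
  show Ideal.Quotient.mk _ (Emv (X 0)) = _
  rw [Emv_X0]; rfl
lemma eRD_b₃ : eRD b₃ = algebraMap Ap (AdjoinRoot G) (X 1) := by
  show Ideal.Quotient.mk _ (Emv (X 1)) = _
  rw [Emv_X1]; rfl
def pb : PowerBasis Ap (AdjoinRoot G) := AdjoinRoot.powerBasis' hG
instance : Module.IsTorsionFree Ap (AdjoinRoot G) := pb.basis.isTorsionFree
lemma prime_X0 : Prime (X 0 : Ap) := by
  rw [← MulEquiv.prime_iff (finSuccEquiv ℤ_[2] 1).toMulEquiv]
  rw [show ((finSuccEquiv ℤ_[2] 1).toMulEquiv (X 0) : Polynomial (MvPolynomial (Fin 1) ℤ_[2])) =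
    Polynomial.X from finSuccEquiv_X_zero]
  exact Polynomial.prime_X
lemma not_dvd_X0_X1 : ¬ (X 0 : Ap) ∣ X 1 := by
  rintro ⟨k, hk⟩
  have := congrArg (aeval (fun i : Fin 2 => if i = 0 then (0 : ℤ_[2]) else 1)) hk
  simp at this

-- regularity in AdjoinRoot G
lemma regA {a : Ap} (ha : a ≠ 0) {z : AdjoinRoot G}
    (h : algebraMap Ap (AdjoinRoot G) a * z = 0) : z = 0 := by
  rw [← Algebra.smul_def] at h
  exact (smul_eq_zero.mp h).resolve_left ha

lemma keyA (m n : ℕ) (z₁ z₂ : AdjoinRoot G)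
    (h : algebraMap Ap (AdjoinRoot G) ((X 1) ^ n) * z₁
       = algebraMap Ap (AdjoinRoot G) ((X 0) ^ m) * z₂) :
    ∃ z, z₁ = algebraMap Ap (AdjoinRoot G) ((X 0) ^ m) * z
       ∧ z₂ = algebraMap Ap (AdjoinRoot G) ((X 1) ^ n) * z := by
  rw [← Algebra.smul_def, ← Algebra.smul_def] at h
  set B := pb.basis with hB
  have hc : ∀ i, (X 1 : Ap) ^ n * B.repr z₁ i = (X 0 : Ap) ^ m * B.repr z₂ i := by
    intro i
    have := congrArg (fun w => B.repr w i) h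
    simpa using this
  have hnd : ¬ (X 0 : Ap) ∣ (X 1) ^ n := fun hd => not_dvd_X0_X1 (prime_X0.dvd_of_dvd_pow hd)
  have hdvd : ∀ i, (X 0 : Ap) ^ m ∣ B.repr z₁ i := fun i =>
    prime_X0.pow_dvd_of_dvd_mul_left m hnd ⟨B.repr z₂ i, hc i⟩
  choose t ht using hdvd
  refine ⟨∑ i, t i • B i, ?_, ?_⟩
  · apply B.ext_elem
    intro i
    rw [Algebra.smul_def] at *
    rw [← Algebra.smul_def, map_smul]
    simp [Module.Basis.repr_sum_self, ht i, Finsupp.single_apply]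
  · apply B.ext_elem
    intro i
    rw [← Algebra.smul_def, map_smul]
    have hx : (X 0 : Ap) ^ m ≠ 0 := pow_ne_zero _ (X_ne_zero 0)
    have : (X 0 : Ap) ^ m * ((X 1) ^ n * t i) = (X 0 : Ap) ^ m * B.repr z₂ i := by
      rw [← hc i, ht i]; ring
    have h2 := mul_left_cancel₀ hx this
    simp [Module.Basis.repr_sum_self, ← h2, Finsupp.single_apply]

-- transfer to RD
lemma reg₁ (m : ℕ) (r : RD) (h : b₁ ^ m * r = 0) : r = 0 := by
  have h' := congrArg eRD h
  rw [map_mul, map_pow, eRD_b₁, ← map_pow, map_zero] at h'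
  have := regA (pow_ne_zero m (X_ne_zero 0)) h'
  exact eRD.injective (by rw [this, map_zero])
lemma reg₃ (m : ℕ) (r : RD) (h : b₃ ^ m * r = 0) : r = 0 := by
  have h' := congrArg eRD h
  rw [map_mul, map_pow, eRD_b₃, ← map_pow, map_zero] at h'
  have := regA (pow_ne_zero m (X_ne_zero 1)) h'
  exact eRD.injective (by rw [this, map_zero])
lemma reg₁₃ (m : ℕ) (r : RD) (h : (b₁ * b₃) ^ m * r = 0) : r = 0 := by
  rw [mul_pow, mul_assoc] at h
  exact reg₃ m r (reg₁ m _ h)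

lemma keyRD (m n : ℕ) (r₁ r₂ : RD) (h : b₃ ^ n * r₁ = b₁ ^ m * r₂) :
    ∃ r, r₁ = b₁ ^ m * r ∧ r₂ = b₃ ^ n * r := by
  have h' := congrArg eRD h
  rw [map_mul, map_mul, map_pow, map_pow, eRD_b₁, eRD_b₃, ← map_pow, ← map_pow] at h'
  obtain ⟨z, hz1, hz2⟩ := keyA m n _ _ h'
  refine ⟨eRD.symm z, eRD.injective ?_, eRD.injective ?_⟩
  · rw [map_mul, map_pow, eRD_b₁, RingEquiv.apply_symm_apply, ← map_pow]; exact hz1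
  · rw [map_mul, map_pow, eRD_b₃, RingEquiv.apply_symm_apply, ← map_pow]; exact hz2

set_option maxHeartbeats 1000000 in
set_option synthInstance.maxHeartbeats 1000000 in
/-- The Mayer–Vietoris sequence for the cover by the loci where `a₁`
and `a₃` are invertible degenerates: the map `α : R → R[1/a₁] × R[1/a₃]` is injective,
and for the (compatible) maps into `R[1/(a₁a₃)]` the kernel of the difference map `β`
is exactly the range of `α`. -/
theorem mayer_vietoris_degeneration :
    Function.Injective (fun r : RD =>
      (algebraMap RD (Localization.Away b₁) r, algebraMap RD (Localization.Away b₃) r)) ∧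
    ∀ (φ₁ : Localization.Away b₁ →+* Localization.Away (b₁ * b₃))
      (φ₂ : Localization.Away b₃ →+* Localization.Away (b₁ * b₃)),
      (∀ r : RD, φ₁ (algebraMap RD (Localization.Away b₁) r) =
        algebraMap RD (Localization.Away (b₁ * b₃)) r) →
      (∀ r : RD, φ₂ (algebraMap RD (Localization.Away b₃) r) =
        algebraMap RD (Localization.Away (b₁ * b₃)) r) →
      ∀ (p : Localization.Away b₁) (q : Localization.Away b₃),
        φ₁ p - φ₂ q = 0 ↔
          ∃ r : RD, algebraMap RD (Localization.Away b₁) r = p ∧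
            algebraMap RD (Localization.Away b₃) r = q := by
  constructor
  · intro r s h
    have h0 : algebraMap RD (Localization.Away b₁) r
        = algebraMap RD (Localization.Away b₁) s := congrArg Prod.fst h
    have h1 : algebraMap RD (Localization.Away b₁) (r - s) = 0 := by
      rw [map_sub (algebraMap RD (Localization.Away b₁)) r s, h0, sub_self]
    obtain ⟨⟨u, k, hk⟩, hu⟩ := (IsLocalization.map_eq_zero_iff (Submonoid.powers b₁)
      (Localization.Away b₁) (r - s)).mp h1
    have hz : b₁ ^ k * (r - s) = 0 := by rw [show b₁ ^ k = u from hk]; exact hu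
    exact sub_eq_zero.mp (reg₁ k _ hz)
  · intro φ₁ φ₂ hφ₁ hφ₂ p q
    constructor
    · intro h
      have hpq : φ₁ p = φ₂ q := sub_eq_zero.mp h
      obtain ⟨⟨r₁, u₁⟩, hp⟩ := IsLocalization.surj (Submonoid.powers b₁) p
      obtain ⟨m, hm⟩ := u₁.2
      obtain ⟨⟨r₂, u₂⟩, hq⟩ := IsLocalization.surj (Submonoid.powers b₃) q
      obtain ⟨n, hn⟩ := u₂.2
      have hp1 : p * algebraMap RD (Localization.Away b₁) (b₁ ^ m)
          = algebraMap RD (Localization.Away b₁) r₁ := by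
        rw [show b₁ ^ m = (u₁ : RD) from hm]; exact hp
      have hq1 : q * algebraMap RD (Localization.Away b₃) (b₃ ^ n)
          = algebraMap RD (Localization.Away b₃) r₂ := by
        rw [show b₃ ^ n = (u₂ : RD) from hn]; exact hq
      have hp' : φ₁ p * algebraMap RD (Localization.Away (b₁ * b₃)) (b₁ ^ m)
          = algebraMap RD (Localization.Away (b₁ * b₃)) r₁ := by
        rw [← hφ₁, ← hφ₁, ← RingHom.map_mul, hp1]
      have hq' : φ₂ q * algebraMap RD (Localization.Away (b₁ * b₃)) (b₃ ^ n)
          = algebraMap RD (Localization.Away (b₁ * b₃)) r₂ := by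
        rw [← hφ₂, ← hφ₂, ← RingHom.map_mul, hq1]
      have hzero : algebraMap RD (Localization.Away (b₁ * b₃)) (b₃ ^ n * r₁ - b₁ ^ m * r₂)
          = 0 := by
        rw [map_sub (algebraMap RD (Localization.Away (b₁ * b₃))) (b₃ ^ n * r₁) (b₁ ^ m * r₂),
          RingHom.map_mul, RingHom.map_mul, ← hp', ← hq', hpq]
        ring
      obtain ⟨⟨u, k, hk⟩, hu⟩ := (IsLocalization.map_eq_zero_iff (Submonoid.powers (b₁ * b₃))
        (Localization.Away (b₁ * b₃)) _).mp hzero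
      have hz : (b₁ * b₃) ^ k * (b₃ ^ n * r₁ - b₁ ^ m * r₂) = 0 := by
        rw [show (b₁ * b₃) ^ k = u from hk]; exact hu
      have heq : b₃ ^ n * r₁ = b₁ ^ m * r₂ := sub_eq_zero.mp (reg₁₃ k _ hz)
      obtain ⟨r, hr₁, hr₂⟩ := keyRD m n r₁ r₂ heq
      refine ⟨r, ?_, ?_⟩
      · have hunit := IsLocalization.map_units (Localization.Away b₁)
          (⟨b₁ ^ m, m, rfl⟩ : Submonoid.powers b₁)
        apply hunit.mul_right_cancel
        rw [hp1, hr₁, RingHom.map_mul]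
        ring
      · have hunit := IsLocalization.map_units (Localization.Away b₃)
          (⟨b₃ ^ n, n, rfl⟩ : Submonoid.powers b₃)
        apply hunit.mul_right_cancel
        rw [hq1, hr₂, RingHom.map_mul]
        ring
    · rintro ⟨r, rfl, rfl⟩
      rw [hφ₁, hφ₂, sub_self]
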